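/- Let n ≥ 1, let f₁, f₂ : ℝⁿ → ℝ be convex functions and x ∈ ℝⁿ. Assume that D_t f₂(x) ⊆ D_t f₁(x) for every t > 0. Then for every t > 0 there exists ε₀ ≥ 0 such that for all ε ≥ ε₀ one has ∂_ε f₂(x) ⊆ ∂_ε f₁(x) + closedBall(0, ε/t) (Minkowski sum with the closed ball of radius ε/t centered at the origin). -/

import Mathlib

open scoped RealInnerProductSpace Pointwise

/-- The ε-subdifferential of `g` at `x`. -/
def epsSubdiff {n : ℕ} (g : EuclideanSpace ℝ (Fin n) → ℝ) (ε : ℝ)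
    (x : EuclideanSpace ℝ (Fin n)) : Set (EuclideanSpace ℝ (Fin n)) :=
  {ξ | ∀ y, g y ≥ g x + ⟪ξ, y - x⟫ - ε}

/-- The subdifferential of `g` at `x`. -/
def subdiff {n : ℕ} (g : EuclideanSpace ℝ (Fin n) → ℝ)
    (x : EuclideanSpace ℝ (Fin n)) : Set (EuclideanSpace ℝ (Fin n)) :=
  {ξ | ∀ y, g y ≥ g x + ⟪ξ, y - x⟫}

/-- The t-spherical subdifferential of `g` at `x`. -/
def sphSubdiff {n : ℕ} (g : EuclideanSpace ℝ (Fin n) → ℝ) (t : ℝ)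
    (x : EuclideanSpace ℝ (Fin n)) : Set (EuclideanSpace ℝ (Fin n)) :=
  convexHull ℝ {ξ | ∃ d : EuclideanSpace ℝ (Fin n), ‖d‖ = 1 ∧ ξ ∈ subdiff g (x + t • d)}

section Aux

variable {n : ℕ}

local notation "E" => EuclideanSpace ℝ (Fin n)

/-- Existence of subgradients for a finite convex function on `ℝⁿ`. -/
lemma subgrad_exists (f : E → ℝ) (hf : ConvexOn ℝ Set.univ f) (z : E) :
    ∃ ξ, ξ ∈ subdiff f z := by
  have hcont : Continuous f := continuousOn_univ.mp (hf.continuousOn isOpen_univ)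
  set S : Set (E × ℝ) := {p | f p.1 < p.2} with hS
  have hSopen : IsOpen S := isOpen_lt (hcont.comp continuous_fst) continuous_snd
  have hSconv : Convex ℝ S := by
    rintro ⟨p1, p2⟩ hp ⟨q1, q2⟩ hq a b ha hb hab
    simp only [hS, Set.mem_setOf_eq] at hp hq ⊢
    have hsum : f (a • p1 + b • q1) ≤ a * f p1 + b * f q1 :=
      hf.2 (Set.mem_univ _) (Set.mem_univ _) ha hb hab
    have hpos : 0 < a ∨ 0 < b := by
      rcases ha.eq_or_lt with h | h
      · right; rw [← h] at hab; linarith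
      · left; exact h
    rcases hpos with h | h
    · have h1 : a * f p1 < a * p2 := by nlinarith
      have h2 : b * f q1 ≤ b * q2 := by nlinarith
      calc f (a • p1 + b • q1) ≤ a * f p1 + b * f q1 := hsum
        _ < a * p2 + b * q2 := by linarith
    · have h1 : a * f p1 ≤ a * p2 := by nlinarith
      have h2 : b * f q1 < b * q2 := by nlinarith
      calc f (a • p1 + b • q1) ≤ a * f p1 + b * f q1 := hsum
        _ < a * p2 + b * q2 := by linarith
  have hzS : (z, f z) ∉ S := by simp [hS]
  obtain ⟨φ, hφ⟩ := geometric_hahn_banach_open_point hSconv hSopen hzS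
  set c : ℝ := φ ((0 : E), (1 : ℝ)) with hc_def
  have hdecomp : ∀ (y : E) (r : ℝ), φ (y, r) = φ (y, 0) + r * c := by
    intro y r
    have h : ((y, r) : E × ℝ) = (y, (0:ℝ)) + r • ((0 : E), (1:ℝ)) := by
      simp [Prod.ext_iff]
    rw [h, map_add, map_smul, smul_eq_mul]
  have hc : c < 0 := by
    have h := hφ (z, f z + 1) (by simp [hS])
    rw [hdecomp z (f z + 1), hdecomp z (f z)] at h
    linarith
  have key : ∀ y : E, φ (y, 0) + f y * c ≤ φ (z, 0) + f z * c := by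
    intro y
    by_contra hcon
    push_neg at hcon
    set A := φ (y, 0) + f y * c with hA
    set B := φ (z, 0) + f z * c with hB
    set δ := (A - B) / (-c) with hδ_def
    have hδ : 0 < δ := div_pos (by linarith) (by linarith)
    have h1 := hφ (y, f y + δ) (by simp [hS]; linarith)
    rw [hdecomp y (f y + δ), hdecomp z (f z)] at h1
    have h2 : δ * (-c) = A - B := div_mul_cancel₀ _ (by linarith)
    nlinarith
  set ψ : E →L[ℝ] ℝ := (-c)⁻¹ • (φ.comp (ContinuousLinearMap.inl ℝ E ℝ)) with hψ_def
  refine ⟨(InnerProductSpace.toDual ℝ E).symm ψ, fun y => ?_⟩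
  have hinner : ⟪(InnerProductSpace.toDual ℝ E).symm ψ, y - z⟫ = ψ (y - z) :=
    InnerProductSpace.toDual_symm_apply
  have hψval : ψ (y - z) = (-c)⁻¹ * (φ (y, 0) - φ (z, 0)) := by
    simp only [hψ_def, ContinuousLinearMap.smul_apply, ContinuousLinearMap.comp_apply,
      ContinuousLinearMap.inl_apply, smul_eq_mul]
    congr 1
    have : ((y - z, (0:ℝ)) : E × ℝ) = (y, (0:ℝ)) - (z, (0:ℝ)) := by simp [Prod.ext_iff]
    rw [this, map_sub]
  have hkey := key y
  have hcpos : 0 < -c := by linarith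
  have h3 : φ (y, 0) - φ (z, 0) ≤ (f y - f z) * (-c) := by nlinarith
  have h4 : (-c)⁻¹ * (φ (y, 0) - φ (z, 0)) ≤ f y - f z := by
    have h5 := mul_le_mul_of_nonneg_left h3 (inv_nonneg.mpr hcpos.le)
    have h6 : (-c)⁻¹ * ((f y - f z) * -c) = f y - f z := by
      rw [mul_comm (f y - f z) (-c), ← mul_assoc, inv_mul_cancel₀ (ne_of_gt hcpos), one_mul]
    linarith
  rw [ge_iff_le, hinner, hψval]
  linarith

lemma epsSubdiff_convex (f : E → ℝ) (ε : ℝ) (x : E) : Convex ℝ (epsSubdiff f ε x) := by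
  intro ξ hξ η hη a b ha hb hab y
  have h1 := hξ y
  have h2 := hη y
  have hi : ⟪a • ξ + b • η, y - x⟫ = a * ⟪ξ, y - x⟫ + b * ⟪η, y - x⟫ := by
    rw [inner_add_left, real_inner_smul_left, real_inner_smul_left]
  simp only [epsSubdiff, Set.mem_setOf_eq, ge_iff_le] at h1 h2 ⊢
  rw [hi]
  have h3 := add_le_add (mul_le_mul_of_nonneg_left h1 ha) (mul_le_mul_of_nonneg_left h2 hb)
  have h5 : a * (f x + ⟪ξ, y - x⟫ - ε) + b * (f x + ⟪η, y - x⟫ - ε)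
      = f x + (a * ⟪ξ, y - x⟫ + b * ⟪η, y - x⟫) - ε + (a + b - 1) * (f x - ε) := by ring
  have h6 : a * f y + b * f y = f y + (a + b - 1) * f y := by ring
  rw [hab] at h5 h6
  norm_num at h5 h6
  linarith

lemma epsSubdiff_closed (f : E → ℝ) (ε : ℝ) (x : E) : IsClosed (epsSubdiff f ε x) := by
  have : epsSubdiff f ε x = ⋂ y, {ξ : E | f x + ⟪ξ, y - x⟫ - ε ≤ f y} := by
    ext ξ; simp [epsSubdiff]
  rw [this]
  refine isClosed_iInter fun y => isClosed_le ?_ continuous_const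
  have hcont : Continuous fun ξ : E => (inner ℝ ξ (y - x) : ℝ) :=
    continuous_id.inner continuous_const
  exact (continuous_const.add hcont).sub continuous_const

lemma epsSubdiff_mono (f : E → ℝ) {ε ε' : ℝ} (h : ε ≤ ε') (x : E) :
    epsSubdiff f ε x ⊆ epsSubdiff f ε' x := by
  intro ξ hξ y
  have := hξ y
  linarith

/-- The spherical subdifferential is contained in a uniform ε-subdifferential. -/
lemma sph_subset_eps (f : E → ℝ) (hf : ConvexOn ℝ Set.univ f) (x : E) {t : ℝ} (ht : 0 < t) :
    ∃ ε₀ : ℝ, 0 ≤ ε₀ ∧ ∀ ε : ℝ, ε₀ ≤ ε → sphSubdiff f t x ⊆ epsSubdiff f ε x := by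
  have hcont : Continuous f := continuousOn_univ.mp (hf.continuousOn isOpen_univ)
  have hcomp : IsCompact (Metric.closedBall x (t + 1)) := isCompact_closedBall x (t + 1)
  have hxball : x ∈ Metric.closedBall x (t + 1) := Metric.mem_closedBall_self (by linarith)
  obtain ⟨aM, haM, hM⟩ := hcomp.exists_isMaxOn ⟨x, hxball⟩ hcont.continuousOn
  obtain ⟨am, ham, hm⟩ := hcomp.exists_isMinOn ⟨x, hxball⟩ hcont.continuousOn
  set M := f aM with hMdef
  set m := f am with hmdef
  have hMm : m ≤ M := hm haM
  refine ⟨(1 + t) * (M - m), by nlinarith, fun ε hε => ?_⟩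
  rw [sphSubdiff]
  refine convexHull_min ?_ (epsSubdiff_convex f ε x)
  rintro ξ ⟨d, hd, hξ⟩
  have hxd : x + t • d ∈ Metric.closedBall x (t + 1) := by
    rw [Metric.mem_closedBall, dist_eq_norm]
    simp only [add_sub_cancel_left, norm_smul, Real.norm_eq_abs, abs_of_pos ht, hd]
    linarith
  -- bound on ‖ξ‖
  have hnorm : ‖ξ‖ ≤ M - m := by
    rcases eq_or_ne ξ 0 with rfl | hξ0
    · simp; linarith
    · have hy := hξ ((x + t • d) + ‖ξ‖⁻¹ • ξ)
      have hiy : ⟪ξ, ((x + t • d) + ‖ξ‖⁻¹ • ξ) - (x + t • d)⟫ = ‖ξ‖ := by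
        rw [add_sub_cancel_left, real_inner_smul_right, real_inner_self_eq_norm_sq, sq,
          ← mul_assoc, inv_mul_cancel₀ (norm_ne_zero_iff.mpr hξ0), one_mul]
      rw [hiy] at hy
      have hyball : (x + t • d) + ‖ξ‖⁻¹ • ξ ∈ Metric.closedBall x (t + 1) := by
        rw [Metric.mem_closedBall, dist_eq_norm]
        have : (x + t • d) + ‖ξ‖⁻¹ • ξ - x = t • d + ‖ξ‖⁻¹ • ξ := by abel
        rw [this]
        calc ‖t • d + ‖ξ‖⁻¹ • ξ‖ ≤ ‖t • d‖ + ‖‖ξ‖⁻¹ • ξ‖ := norm_add_le _ _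
          _ ≤ t + 1 := by
            simp only [norm_smul, Real.norm_eq_abs, abs_of_pos ht, hd,
              abs_of_nonneg (inv_nonneg.mpr (norm_nonneg ξ))]
            rw [inv_mul_cancel₀ (norm_ne_zero_iff.mpr hξ0)]
            simp
      have h1 : f ((x + t • d) + ‖ξ‖⁻¹ • ξ) ≤ M := hM hyball
      have h2 : m ≤ f (x + t • d) := hm hxd
      linarith
  -- conclusion
  intro y
  have hy := hξ y
  have hiy : ⟪ξ, y - (x + t • d)⟫ = ⟪ξ, y - x⟫ - t * ⟪ξ, d⟫ := by
    have : y - (x + t • d) = (y - x) - t • d := by abel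
    rw [this, inner_sub_right, real_inner_smul_right]
  rw [hiy] at hy
  have hid : ⟪ξ, d⟫ ≤ ‖ξ‖ := by
    calc ⟪ξ, d⟫ ≤ ‖ξ‖ * ‖d‖ := real_inner_le_norm ξ d
      _ = ‖ξ‖ := by rw [hd, mul_one]
  have h1 : f x ≤ M := hM hxball
  have h2 : m ≤ f (x + t • d) := hm hxd
  have hterm : t * ⟪ξ, d⟫ ≤ t * (M - m) := by nlinarith
  have : f y ≥ f x + ⟪ξ, y - x⟫ - ((1 + t) * (M - m)) := by nlinarith
  linarith

end Aux

theorem approx_optimality_condition {n : ℕ} (hn : 1 ≤ n)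
    (f₁ f₂ : EuclideanSpace ℝ (Fin n) → ℝ)
    (h₁ : ConvexOn ℝ Set.univ f₁) (h₂ : ConvexOn ℝ Set.univ f₂)
    (x : EuclideanSpace ℝ (Fin n))
    (hD : ∀ t : ℝ, 0 < t → sphSubdiff f₂ t x ⊆ sphSubdiff f₁ t x) :
    ∀ t : ℝ, 0 < t → ∃ ε₀ : ℝ, 0 ≤ ε₀ ∧ ∀ ε : ℝ, ε₀ ≤ ε →
      epsSubdiff f₂ ε x ⊆
        epsSubdiff f₁ ε x + Metric.closedBall (0 : EuclideanSpace ℝ (Fin n)) (ε / t) := by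
  intro t ht
  obtain ⟨ε₀, hε₀, hsph⟩ := sph_subset_eps f₁ h₁ x ht
  refine ⟨ε₀, hε₀, fun ε hε ξs hξs => ?_⟩
  have hεnn : 0 ≤ ε := le_trans hε₀ hε
  have hεt : 0 ≤ ε / t := div_nonneg hεnn ht.le
  by_contra hnot
  set T := epsSubdiff f₁ ε x + Metric.closedBall (0 : EuclideanSpace ℝ (Fin n)) (ε / t) with hT
  have hTconv : Convex ℝ T :=
    (epsSubdiff_convex f₁ ε x).add (convex_closedBall _ _)
  have hTclosed : IsClosed T :=
    (epsSubdiff_closed f₁ ε x).add_right_of_isCompact (isCompact_closedBall _ _)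
  obtain ⟨φ, u, hφ, hu⟩ := geometric_hahn_banach_closed_point hTconv hTclosed hnot
  -- T is nonempty
  obtain ⟨ξ₁, hξ₁⟩ := subgrad_exists f₁ h₁ x
  have hξ₁ε : ξ₁ ∈ epsSubdiff f₁ ε x := by
    intro y; have := hξ₁ y; linarith
  have hTne : ξ₁ ∈ T := by
    rw [hT]
    have h0 : (0 : EuclideanSpace ℝ (Fin n)) ∈ Metric.closedBall (0 : EuclideanSpace ℝ (Fin n)) (ε / t) :=
      Metric.mem_closedBall_self hεt
    simpa using Set.add_mem_add hξ₁ε h0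
  -- represent φ by a vector
  set d₀ := (InnerProductSpace.toDual ℝ (EuclideanSpace ℝ (Fin n))).symm φ with hd₀
  have hd₀app : ∀ v, ⟪d₀, v⟫ = φ v := fun v => InnerProductSpace.toDual_symm_apply
  have hd₀ne : d₀ ≠ 0 := by
    intro h0
    have h1 := hφ ξ₁ hTne
    have h2 : φ ξ₁ = 0 := by rw [← hd₀app, h0]; simp
    have h3 : φ ξs = 0 := by rw [← hd₀app, h0]; simp
    rw [h2] at h1; rw [h3] at hu; linarith
  set d := ‖d₀‖⁻¹ • d₀ with hd_def
  have hd1 : ‖d‖ = 1 := norm_smul_inv_norm hd₀ne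
  have hd₀pos : 0 < ‖d₀‖ := norm_pos_iff.mpr hd₀ne
  -- a subgradient of f₂ at x + t • d
  obtain ⟨ξd, hξd⟩ := subgrad_exists f₂ h₂ (x + t • d)
  have hbase : ξd ∈ sphSubdiff f₂ t x :=
    subset_convexHull ℝ _ ⟨d, hd1, hξd⟩
  have hin1 : ξd ∈ sphSubdiff f₁ t x := hD t ht hbase
  have hξdε : ξd ∈ epsSubdiff f₁ ε x := hsph ε hε hin1
  have hηT : ξd + (ε / t) • d ∈ T := by
    rw [hT]
    refine Set.add_mem_add hξdε ?_
    rw [Metric.mem_closedBall, dist_zero_right, norm_smul, Real.norm_eq_abs,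
      abs_of_nonneg hεt, hd1, mul_one]
  have h1 : φ (ξd + (ε / t) • d) < u := hφ _ hηT
  have h2 : u < φ ξs := hu
  -- translate to inner products with d
  have hne : ‖d₀‖ ≠ 0 := ne_of_gt hd₀pos
  have hdinner : ∀ v, ⟪d, v⟫ = ‖d₀‖⁻¹ * φ v := by
    intro v
    rw [hd_def, real_inner_smul_left, hd₀app]
  have hφd : φ d = ‖d₀‖ := by
    rw [← hd₀app, hd_def, real_inner_smul_right, real_inner_self_eq_norm_sq, sq,
      ← mul_assoc, inv_mul_cancel₀ hne, one_mul]
  have hφξs : φ ξs = ‖d₀‖ * ⟪d, ξs⟫ := by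
    rw [hdinner, ← mul_assoc, mul_inv_cancel₀ hne, one_mul]
  have hφη : φ (ξd + (ε / t) • d) = ‖d₀‖ * (⟪d, ξd⟫ + ε / t) := by
    rw [map_add, map_smul, smul_eq_mul, hφd, hdinner]
    field_simp
  have hAB : ⟪d, ξd⟫ + ε / t < ⟪d, ξs⟫ := by
    rw [hφξs] at h2; rw [hφη] at h1
    nlinarith
  -- inequalities from subdifferentials
  have hξs_ineq : ⟪d, ξs⟫ * t ≤ f₂ (x + t • d) - f₂ x + ε := by
    have hy := hξs (x + t • d)
    have hi : ⟪ξs, (x + t • d) - x⟫ = t * ⟪ξs, d⟫ := by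
      rw [add_sub_cancel_left, real_inner_smul_right]
    rw [hi] at hy
    rw [real_inner_comm]
    nlinarith [hy]
  have hξd_ineq : f₂ (x + t • d) - f₂ x ≤ ⟪d, ξd⟫ * t := by
    have hy := hξd x
    have hi : ⟪ξd, x - (x + t • d)⟫ = -(t * ⟪ξd, d⟫) := by
      have : x - (x + t • d) = -(t • d) := by abel
      rw [this, inner_neg_right, real_inner_smul_right]
    rw [hi] at hy
    rw [real_inner_comm]
    nlinarith [hy]
  have htmul : (⟪d, ξd⟫ + ε / t) * t = ⟪d, ξd⟫ * t + ε := by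
    field_simp
  nlinarith [mul_lt_mul_of_pos_right hAB ht]
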